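/- arXiv:1009.2557 — 2 statements merged into one kernel-verified Lean document; each statement's English description precedes it below -/
import Mathlib

section
/- Let c_1, ..., c_m be real numbers with each c_i in (0,1). If the sum of the c_i is greater than 1, then the equation x = ∏_i ((1 - c_i) + c_i x) has a unique solution in the open interval (0,1). -/
open Finset Set Filter Topology

/-- If `c i ∈ (0,1)` and `∑ c i > 1`, the fixed-point equation
`x = ∏ ((1 - cᵢ) + cᵢ x)` has a unique solution in `(0,1)`. -/
theorem stmt_0 (m : ℕ) (c : Fin m → ℝ)
    (hc : ∀ i, c i ∈ Set.Ioo (0:ℝ) 1)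
    (hsum : 1 < ∑ i, c i) :
    ∃! x : ℝ, x ∈ Set.Ioo (0:ℝ) 1 ∧ x = ∏ i, ((1 - c i) + c i * x) := by
  classical
  set f : ℝ → ℝ := fun x => ∏ i, ((1 - c i) + c i * x) with hf
  set P : Fin m → ℝ → ℝ := fun i x => (1 - c i) + c i * x with hPdef
  -- basic facts
  have hm2 : 2 ≤ m := by
    have hle : ∑ i, c i ≤ (m : ℝ) := by
      calc ∑ i, c i ≤ ∑ _i : Fin m, (1:ℝ) := Finset.sum_le_sum fun i _ => (hc i).2.le
      _ = m := by simp
    have : (1:ℝ) < m := lt_of_lt_of_le hsum hle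
    have : 1 < m := by exact_mod_cast this
    omega
  have hP_pos : ∀ (i : Fin m) (x : ℝ), 0 ≤ x → 0 < P i x := by
    intro i x hx
    have h1 := (hc i).1
    have h2 := (hc i).2
    have : 0 ≤ c i * x := mul_nonneg h1.le hx
    simp only [hPdef]
    linarith
  have hP_mono : ∀ (i : Fin m) {x y : ℝ}, x < y → P i x < P i y := by
    intro i x y hxy
    have h1 := (hc i).1
    simp only [hPdef]
    nlinarith
  -- derivative of f
  have hderiv : ∀ x : ℝ, HasDerivAt f (∑ i, (∏ j ∈ Finset.univ.erase i, P j x) * c i) x := by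
    intro x
    have h : ∀ i ∈ (Finset.univ : Finset (Fin m)), HasDerivAt (fun x => P i x) (c i) x := by
      intro i _
      have := ((hasDerivAt_id x).const_mul (c i)).const_add (1 - c i)
      simp only [mul_one] at this
      exact this
    have := HasDerivAt.fun_finsetProd (u := Finset.univ) h
    simpa [smul_eq_mul, hf, hPdef] using this
  have hcont : Continuous f := by
    apply continuous_finset_prod
    intro i _
    continuity
  -- strict monotonicity of derivative on Ioi 0
  have hmono : StrictMonoOn (deriv f) (Set.Ioi (0:ℝ)) := by
    intro x hx y hy hxy
    rw [(hderiv x).deriv, (hderiv y).deriv]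
    have hne : (Finset.univ : Finset (Fin m)).Nonempty := by
      refine Finset.univ_nonempty_iff.2 ?_
      exact Fin.pos_iff_nonempty.1 (by omega)
    refine Finset.sum_lt_sum_of_nonempty hne ?_
    intro i _
    refine mul_lt_mul_of_pos_right ?_ (hc i).1
    refine Finset.prod_lt_prod (fun j _ => hP_pos j x (le_of_lt hx)) (fun j _ => (hP_mono j hxy).le) ?_
    have hne' : (Finset.univ.erase i).Nonempty := by
      rw [← Finset.card_pos, Finset.card_erase_of_mem (Finset.mem_univ i)]
      simp only [Finset.card_univ, Fintype.card_fin]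
      omega
    obtain ⟨j, hj⟩ := hne'
    exact ⟨j, hj, hP_mono j hxy⟩
  -- strict convexity on Ici 0
  have hconv : StrictConvexOn ℝ (Set.Ici (0:ℝ)) f := by
    have := StrictMonoOn.strictConvexOn_of_deriv (convex_Ici 0) hcont.continuousOn
      (by rwa [interior_Ici])
    exact this
  have hf1 : f 1 = 1 := by simp [hf]
  -- f' at 1 equals sum of c
  have hderiv1 : HasDerivAt f (∑ i, c i) 1 := by
    have := hderiv 1
    have heq : ∀ i : Fin m, (∏ j ∈ Finset.univ.erase i, P j 1) * c i = c i := by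
      intro i
      have : ∀ j ∈ Finset.univ.erase i, P j 1 = 1 := by
        intro j _; simp [hPdef]
      rw [Finset.prod_congr rfl this]; simp
    simpa [heq] using this
  -- find z ∈ (0,1) with f z < z
  have hz : ∃ z : ℝ, z ∈ Set.Ioo (0:ℝ) 1 ∧ f z < z := by
    have hts : Tendsto (slope f 1) (𝓝[≠] (1:ℝ)) (𝓝 (∑ i, c i)) :=
      hasDerivAt_iff_tendsto_slope.1 hderiv1
    have hts' : Tendsto (slope f 1) (𝓝[<] (1:ℝ)) (𝓝 (∑ i, c i)) :=
      hts.mono_left (nhdsWithin_mono _ (fun x hx => ne_of_lt hx))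
    have h1 : ∀ᶠ z in 𝓝[<] (1:ℝ), 1 < slope f 1 z :=
      hts'.eventually (eventually_gt_nhds hsum)
    have h2 : ∀ᶠ z in 𝓝[<] (1:ℝ), z ∈ Set.Ioo (0:ℝ) 1 := by
      have : Set.Ioo (0:ℝ) 1 ∈ 𝓝[<] (1:ℝ) := by
        exact Ioo_mem_nhdsLT zero_lt_one
      exact this
    obtain ⟨z, hz1, hz2⟩ := (h1.and h2).exists
    refine ⟨z, hz2, ?_⟩
    have hzlt : z - 1 < 0 := by linarith [hz2.2]
    have : slope f 1 z = (f z - 1) / (z - 1) := by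
      rw [slope_def_field, hf1]
    rw [this] at hz1
    have := (one_lt_div_of_neg hzlt).1 hz1
    linarith
  obtain ⟨z, hzmem, hzlt⟩ := hz
  -- existence via IVT on [0, z]
  have hf0 : (0:ℝ) < f 0 := by
    apply Finset.prod_pos
    intro i _
    simpa using (hc i).2
  have hex : ∃ x ∈ Set.Ioo (0:ℝ) 1, f x = x := by
    set g : ℝ → ℝ := fun x => f x - x with hg
    have hgc : ContinuousOn g (Set.Icc 0 z) := (hcont.sub continuous_id).continuousOn
    have hsub : Set.Ioo (g z) (g 0) ⊆ g '' Set.Ioo 0 z :=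
      intermediate_value_Ioo' (le_of_lt hzmem.1) hgc
    have h0 : (0:ℝ) ∈ Set.Ioo (g z) (g 0) := by
      constructor
      · simp only [hg]; linarith
      · simp only [hg]; linarith
    obtain ⟨x, hx, hgx⟩ := hsub h0
    refine ⟨x, ⟨hx.1, lt_trans hx.2 hzmem.2⟩, ?_⟩
    simp only [hg] at hgx; linarith
  obtain ⟨x₀, hx₀mem, hx₀⟩ := hex
  -- uniqueness helper
  have huniq : ∀ a b : ℝ, a ∈ Set.Ioo (0:ℝ) 1 → b ∈ Set.Ioo (0:ℝ) 1 → a < b →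
      f a = a → f b = b → False := by
    intro a b ha hb hab hfa hfb
    have h1a : (0:ℝ) < 1 - a := by linarith [ha.2]
    set t : ℝ := (1 - b) / (1 - a) with ht
    set s : ℝ := (b - a) / (1 - a) with hs
    have htpos : 0 < t := div_pos (by linarith [hb.2]) h1a
    have hspos : 0 < s := div_pos (by linarith) h1a
    have hne1a : (1 - a) ≠ 0 := ne_of_gt h1a
    have hts : t + s = 1 := by
      rw [ht, hs]
      field_simp
      ring
    have hcomb : t * a + s * 1 = b := by
      rw [ht, hs]
      field_simp
      ring
    have key := hconv.2 (Set.mem_Ici.2 ha.1.le) (Set.mem_Ici.2 (by norm_num : (0:ℝ) ≤ 1))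
      (ne_of_lt ha.2) htpos hspos hts
    simp only [smul_eq_mul, hcomb, hfa, hf1, mul_one] at key
    have : t * a + s = b := by rw [← hcomb]; ring
    rw [this, hfb] at key
    exact lt_irrefl b key
  refine ⟨x₀, ⟨hx₀mem, hx₀.symm⟩, ?_⟩
  rintro y ⟨hymem, hy⟩
  rcases lt_trichotomy y x₀ with h | h | h
  · exact absurd (huniq y x₀ hymem hx₀mem h hy.symm hx₀) (fun h => h)
  · exact h
  · exact absurd (huniq x₀ y hx₀mem hymem h hx₀ hy.symm) (fun h => h)
end

section
/- Let c_1, ..., c_m be real numbers with each c_i in (0,1). If the sum of the c_i is strictly less than 1, then the equation x = ∏_i ((1 - c_i) + c_i x) has no solution in the open interval (0,1). -/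
lemma aux_one_sub_sum_le_prod {ι : Type*} [DecidableEq ι] (s : Finset ι) (f : ι → ℝ)
    (h0 : ∀ i ∈ s, 0 ≤ f i) (h1 : ∀ i ∈ s, f i ≤ 1) :
    1 - ∑ i ∈ s, f i ≤ ∏ i ∈ s, (1 - f i) := by
  induction s using Finset.induction_on with
  | empty => simp
  | insert _ _ hx ih =>
    rename_i a s
    rw [Finset.sum_insert hx, Finset.prod_insert hx]
    have ha0 := h0 a (Finset.mem_insert_self a s)
    have ha1 := h1 a (Finset.mem_insert_self a s)
    have ih' := ih (fun i hi => h0 i (Finset.mem_insert_of_mem hi))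
      (fun i hi => h1 i (Finset.mem_insert_of_mem hi))
    have hsum : 0 ≤ ∑ i ∈ s, f i := Finset.sum_nonneg (fun i hi => h0 i (Finset.mem_insert_of_mem hi))
    nlinarith [mul_nonneg ha0 hsum]

/-- If `c i ∈ (0,1)` and `∑ c i < 1`, the fixed-point equation
`x = ∏ ((1 - cᵢ) + cᵢ x)` has no solution in `(0,1)`. -/
theorem stmt_1 (m : ℕ) (c : Fin m → ℝ)
    (hc : ∀ i, c i ∈ Set.Ioo (0:ℝ) 1)
    (hsum : ∑ i, c i < 1) :
    ¬ ∃ x : ℝ, x ∈ Set.Ioo (0:ℝ) 1 ∧ x = ∏ i, ((1 - c i) + c i * x) := by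
  rintro ⟨x, ⟨hx0, hx1⟩, hfix⟩
  have key := aux_one_sub_sum_le_prod Finset.univ (fun i => c i * (1 - x))
    (fun i _ => show (0:ℝ) ≤ c i * (1 - x) from mul_nonneg (hc i).1.le (by linarith))
    (fun i _ => by have h1 := (hc i).1; have h2 := (hc i).2; show c i * (1 - x) ≤ 1; nlinarith)
  simp only [← Finset.sum_mul] at key
  have heq : ∏ i, (1 - c i * (1 - x)) = ∏ i, ((1 - c i) + c i * x) := by
    apply Finset.prod_congr rfl; intro i _; ring
  rw [heq, ← hfix] at key
  nlinarith
end
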